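/- Let T be an invertible measure-preserving transformation of a probability space (X, 𝔅, μ), let J be a positive integer, and let B ∈ 𝔅 be such that the sets T^i B for i = −J, …, J are pairwise disjoint. Let a_{−J}, …, a_J be nonnegative reals and set f = ∑_{i=−J}^{J} a_i · 1_{T^i B}. Then for every positive integer n and every x ∈ X, N_n(f)(x)/n ≥ ∑_{i=−J}^{J} 1_{T^i B}(x) · (1/n)·#{k ∈ ℕ : 1 ≤ k ≤ J − |i| and a_{k+i}/k > 1/n}. -/

import Mathlib

open MeasureTheory Set
open scoped ENNReal ENat

/-- The counting function `N_n(f)(x) = #{k ≥ 1 : f(T^k x)/k > 1/n}`, valued in `ℝ≥0∞`. -/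
noncomputable def countN {X : Type*} (T : X → X) (f : X → ℝ) (n : ℕ) (x : X) : ℝ≥0∞ :=
  ({k : ℕ | 1 ≤ k ∧ f (T^[k] x) / k > 1 / n}.encard : ℕ∞)

/-- The `i`-th power (for `i : ℤ`) of an invertible transformation. -/
noncomputable def ziter {X : Type*} [MeasurableSpace X] (T : X ≃ᵐ X) (i : ℤ) : X → X :=
  if 0 ≤ i then (⇑T)^[i.toNat] else (⇑T.symm)^[(-i).toNat]

lemma ziter_succ {X : Type*} [MeasurableSpace X] (T : X ≃ᵐ X) (i : ℤ) (b : X) :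
    ziter T (i + 1) b = T (ziter T i b) := by
  unfold ziter
  rcases le_or_gt 0 i with h | h
  · rw [if_pos (show (0:ℤ) ≤ i + 1 by omega), if_pos h,
      show (i + 1).toNat = i.toNat + 1 by omega, Function.iterate_succ_apply']
  · rw [if_neg (show ¬ (0:ℤ) ≤ i by omega),
      show (-i).toNat = (-(i+1)).toNat + 1 by omega,
      Function.iterate_succ_apply', T.apply_symm_apply]
    by_cases h1 : 0 ≤ i + 1
    · rw [if_pos h1, show (i+1).toNat = 0 by omega, show (-(i+1)).toNat = 0 by omega]
      simp
    · rw [if_neg h1]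

lemma ziter_add_nat {X : Type*} [MeasurableSpace X] (T : X ≃ᵐ X) (i : ℤ) (k : ℕ) (b : X) :
    (⇑T)^[k] (ziter T i b) = ziter T (i + k) b := by
  induction k with
  | zero => simp
  | succ k ih =>
    rw [Function.iterate_succ_apply', ih,
      show i + ((k + 1 : ℕ) : ℤ) = (i + (k : ℤ)) + 1 by push_cast; ring, ziter_succ]

/-- **Rohlin tower estimate.** If the sets `T^i B`, `−J ≤ i ≤ J`, are pairwise disjoint
and `f = ∑_{i=−J}^{J} a_i · 1_{T^i B}` with `a_i ≥ 0`, then for every `n ≥ 1` and every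
`x`, `N_n(f)(x)/n ≥ ∑_{i=−J}^{J} 1_{T^i B}(x) · (1/n)·#{1 ≤ k ≤ J−|i| : a_{k+i}/k > 1/n}`. -/
theorem rohlin_tower_counting_estimate
    {X : Type*} [MeasurableSpace X] (μ : Measure X) [IsProbabilityMeasure μ]
    (T : X ≃ᵐ X) (hT : MeasurePreserving T μ μ)
    (J : ℕ) (hJ : 0 < J) (B : Set X) (hB : MeasurableSet B)
    (hdisj : ∀ i ∈ Finset.Icc (-(J : ℤ)) J, ∀ i' ∈ Finset.Icc (-(J : ℤ)) J,
      i ≠ i' → Disjoint (ziter T i '' B) (ziter T i' '' B))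
    (a : ℤ → ℝ) (ha : ∀ i ∈ Finset.Icc (-(J : ℤ)) J, 0 ≤ a i)
    (f : X → ℝ)
    (hf : f = fun x => ∑ i ∈ Finset.Icc (-(J : ℤ)) J,
      Set.indicator (ziter T i '' B) (fun _ => a i) x) :
    ∀ n : ℕ, 1 ≤ n → ∀ x : X,
      ∑ i ∈ Finset.Icc (-(J : ℤ)) J,
          Set.indicator (ziter T i '' B) (fun _ => (1 : ℝ≥0∞)) x *
            ((({k : ℕ | 1 ≤ k ∧ (k : ℤ) ≤ (J : ℤ) - |i| ∧
                a (k + i) / k > 1 / n}.encard : ℕ∞) : ℝ≥0∞) / n) ≤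
        countN T f n x / n := by
  intro n hn x
  by_cases hx : ∃ i ∈ Finset.Icc (-(J : ℤ)) (J : ℤ), x ∈ ziter T i '' B
  · obtain ⟨i₀, hi₀, b, hb, hbx⟩ := hx
    rw [Finset.sum_eq_single_of_mem i₀ hi₀ (fun i hi hne => by
      rw [Set.indicator_of_notMem, zero_mul]
      intro hmem
      exact Set.disjoint_left.mp (hdisj i hi i₀ hi₀ hne) hmem
        (show x ∈ ziter T i₀ '' B from ⟨b, hb, hbx⟩))]
    rw [Set.indicator_of_mem (show x ∈ ziter T i₀ '' B from ⟨b, hb, hbx⟩), one_mul]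
    apply ENNReal.div_le_div_right
    show ((_ : ℕ∞) : ℝ≥0∞) ≤ ((_ : ℕ∞) : ℝ≥0∞)
    rw [ENat.toENNReal_le]
    apply Set.encard_mono
    rintro k ⟨hk1, hk2, hk3⟩
    refine ⟨hk1, ?_⟩
    have habs1 := le_abs_self i₀
    have habs2 := neg_abs_le i₀
    rw [Finset.mem_Icc] at hi₀
    have hj : i₀ + (k : ℤ) ∈ Finset.Icc (-(J : ℤ)) (J : ℤ) := by
      rw [Finset.mem_Icc]; omega
    have hTx : (⇑T)^[k] x = ziter T (i₀ + k) b := by rw [← hbx, ziter_add_nat]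
    rw [Finset.mem_Icc] at hj
    have hj' : i₀ + (k : ℤ) ∈ Finset.Icc (-(J : ℤ)) (J : ℤ) := by
      rw [Finset.mem_Icc]; omega
    have hfval : f (ziter T (i₀ + (k : ℤ)) b) = a (i₀ + (k : ℤ)) := by
      simp only [hf]
      rw [Finset.sum_eq_single_of_mem (i₀ + (k : ℤ)) hj' (fun i hi hne => by
        refine Set.indicator_of_notMem (fun hmem => ?_) _
        exact Set.disjoint_left.mp (hdisj i hi _ hj' hne) hmem
          (show ziter T (i₀ + (k : ℤ)) b ∈ ziter T (i₀ + (k : ℤ)) '' B from ⟨b, hb, rfl⟩))]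
      exact Set.indicator_of_mem (show ziter T (i₀ + (k : ℤ)) b ∈ _ '' B from ⟨b, hb, rfl⟩) _
    show (1 : ℝ) / n < f ((⇑T)^[k] x) / k
    rw [hTx, hfval, add_comm i₀ (k : ℤ)]
    exact hk3
  · push_neg at hx
    rw [Finset.sum_eq_zero (fun i hi => by
      rw [Set.indicator_of_notMem (hx i hi), zero_mul])]
    exact zero_le
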